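/- Limit of the Q-approximated probability of a positive result in Example 2: in the Example 2 setting, ψ_{Q,n} → Φ( a/√0.96 − z_{0.9} ) as n → ∞ (along even n), where Φ is the standard normal cumulative distribution function and 0.96 = 4·(0.4)·(0.6). -/

import Mathlib

open MeasureTheory ProbabilityTheory Filter Set
open scoped Classical ENNReal NNReal

open Real

noncomputable section

/-- The treatment-arm response probability `ω_{1,n} = 0.4 + a·n^{-1/2}` with total
sample size `n = 2m` (per-arm sample size `m`). -/
def omega1 (a : ℝ) (m : ℕ) : ℝ := 0.4 + a / Real.sqrt (2 * m)

/-- The bivariate normal distribution `f_n` of the center `C = (C₀, C₁)`: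
mean `(ω_{0,n}, ω_{1,n})` and diagonal covariance with entries `ω_{k,n}(1−ω_{k,n})/(n/2)`. -/
def fQ (a : ℝ) (m : ℕ) : Measure (ℝ × ℝ) :=
  (gaussianReal 0.4 (Real.toNNReal (0.4 * (1 - 0.4) / m))).prod
    (gaussianReal (omega1 a m) (Real.toNNReal (omega1 a m * (1 - omega1 a m) / m)))

/-- `v_n = [ω_{0,n}(1−ω_{0,n}) + ω_{1,n}(1−ω_{1,n})]·(2/n)`, the Q-posterior variance of
`δ = θ₁ − θ₀`. -/
def vQ (a : ℝ) (m : ℕ) : ℝ :=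
  (0.4 * (1 - 0.4) + omega1 a m * (1 - omega1 a m)) * (2 / (2 * m))

/-- `ψ_{Q,n} = P(C₁ − C₀ ≥ z_{0.9}·√v_n)` under `C ~ f_n`. -/
def psiQ (a : ℝ) (m : ℕ) (z : ℝ) : ℝ :=
  ((fQ a m) {c : ℝ × ℝ | z * Real.sqrt (vQ a m) ≤ c.2 - c.1}).toReal

/-- The standard normal CDF `Φ`. -/
def stdNormCDF (x : ℝ) : ℝ := ((gaussianReal 0 1) (Set.Iic x)).toReal

lemma conv_pdf (m₁ m₂ u : ℝ) {v₁ v₂ : ℝ≥0} (hv₁ : v₁ ≠ 0) (hv₂ : v₂ ≠ 0) :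
    ∫⁻ x, gaussianPDF m₁ v₁ x * gaussianPDF m₂ v₂ (u + x)
      = gaussianPDF (m₂ - m₁) (v₁ + v₂) u := by
  have hV₁ : (0:ℝ) < (v₁:ℝ) := by positivity
  have hV₂ : (0:ℝ) < (v₂:ℝ) := by positivity
  have hV₁' : (v₁:ℝ) ≠ 0 := ne_of_gt hV₁
  have hV₂' : (v₂:ℝ) ≠ 0 := ne_of_gt hV₂
  have hVs : (0:ℝ) < (v₁:ℝ) + (v₂:ℝ) := by positivity
  have hVs' : (v₁:ℝ) + (v₂:ℝ) ≠ 0 := ne_of_gt hVs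
  set A : ℝ := ((v₁:ℝ) + (v₂:ℝ)) / (2 * (v₁:ℝ) * (v₂:ℝ)) with hA
  have hApos : 0 < A := by positivity
  have hA' : A ≠ 0 := ne_of_gt hApos
  set p : ℝ := (m₁ * (v₂:ℝ) + (m₂ - u) * (v₁:ℝ)) / ((v₁:ℝ) + (v₂:ℝ)) with hp
  set R : ℝ := (u - (m₂ - m₁))^2 / (2 * ((v₁:ℝ) + (v₂:ℝ))) with hR
  set K : ℝ := (√(2 * π * (v₁:ℝ)))⁻¹ * (√(2 * π * (v₂:ℝ)))⁻¹ * rexp (-R) with hK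
  have hKnn : 0 ≤ K := by positivity
  have hpt : ∀ x : ℝ, gaussianPDFReal m₁ v₁ x * gaussianPDFReal m₂ v₂ (u + x)
      = K * rexp (-(A * (x - p)^2)) := by
    intro x
    have hex : rexp (- (x - m₁)^2 / (2 * (v₁:ℝ))) * rexp (- (u + x - m₂)^2 / (2 * (v₂:ℝ)))
        = rexp (-R) * rexp (-(A * (x - p)^2)) := by
      rw [← Real.exp_add, ← Real.exp_add]
      congr 1
      rw [hR, hA, hp]
      field_simp
      ring
    simp only [gaussianPDFReal, hK]
    linear_combination ((√(2 * π * (v₁:ℝ)))⁻¹ * (√(2 * π * (v₂:ℝ)))⁻¹) * hex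
  calc ∫⁻ x, gaussianPDF m₁ v₁ x * gaussianPDF m₂ v₂ (u + x)
      = ∫⁻ x, ENNReal.ofReal (K * rexp (-(A * (x - p)^2))) := by
        refine lintegral_congr fun x => ?_
        rw [gaussianPDF, gaussianPDF, ← ENNReal.ofReal_mul (gaussianPDFReal_nonneg _ _ _), hpt x]
    _ = ENNReal.ofReal K * ∫⁻ x, ENNReal.ofReal (rexp (-(A * (x - p)^2))) := by
        rw [← lintegral_const_mul' _ _ ENNReal.ofReal_ne_top]
        exact lintegral_congr fun x => ENNReal.ofReal_mul hKnn
    _ = ENNReal.ofReal K * ENNReal.ofReal (√(π / A)) := by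
        congr 1
        have h1 : ∫⁻ x, ENNReal.ofReal (rexp (-(A * (x - p)^2)))
            = ∫⁻ x, ENNReal.ofReal (rexp (-(A * x^2))) := by
          have h := lintegral_add_right_eq_self (μ := volume)
            (fun x : ℝ => ENNReal.ofReal (rexp (-(A * x^2)))) (-p)
          rw [← h]
          exact lintegral_congr fun x => by rw [sub_eq_add_neg]
        rw [h1, ← ofReal_integral_eq_lintegral_ofReal]
        · congr 1
          simpa using integral_gaussian A
        · simpa using integrable_exp_neg_mul_sq hApos
        · exact ae_of_all _ fun x => (Real.exp_pos _).le
    _ = gaussianPDF (m₂ - m₁) (v₁ + v₂) u := by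
        rw [gaussianPDF, ← ENNReal.ofReal_mul hKnn]
        congr 1
        rw [gaussianPDFReal, hK, NNReal.coe_add]
        have hs1 : (0:ℝ) < √(2 * π * (v₁:ℝ)) := by positivity
        have hs2 : (0:ℝ) < √(2 * π * (v₂:ℝ)) := by positivity
        have hs3 : (0:ℝ) < √(2 * π * ((v₁:ℝ) + (v₂:ℝ))) := by positivity
        have hsq : √(π / A) * √(2 * π * ((v₁:ℝ) + (v₂:ℝ)))
            = √(2 * π * (v₁:ℝ)) * √(2 * π * (v₂:ℝ)) := by
          rw [← Real.sqrt_mul (by positivity), ← Real.sqrt_mul (by positivity)]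
          congr 1
          rw [hA]
          field_simp
        have hc : (√(2 * π * (v₁:ℝ)))⁻¹ * (√(2 * π * (v₂:ℝ)))⁻¹ * √(π / A)
            = (√(2 * π * ((v₁:ℝ) + (v₂:ℝ))))⁻¹ := by
          have hpa : √(π / A)
              = √(2 * π * (v₁:ℝ)) * √(2 * π * (v₂:ℝ)) / √(2 * π * ((v₁:ℝ) + (v₂:ℝ))) := by
            rw [eq_div_iff hs3.ne']; exact hsq
          rw [hpa]
          field_simp
        have hexp : rexp (-R) = rexp (- (u - (m₂ - m₁))^2 / (2 * ((v₁:ℝ) + (v₂:ℝ)))) := by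
          rw [hR, neg_div]
        calc (√(2 * π * (v₁:ℝ)))⁻¹ * (√(2 * π * (v₂:ℝ)))⁻¹ * rexp (-R) * √(π / A)
            = ((√(2 * π * (v₁:ℝ)))⁻¹ * (√(2 * π * (v₂:ℝ)))⁻¹ * √(π / A)) * rexp (-R) := by
              ring
          _ = _ := by rw [hc, hexp]

lemma prod_gauss_apply (m₁ m₂ t : ℝ) {v₁ v₂ : ℝ≥0} (hv₁ : v₁ ≠ 0) (hv₂ : v₂ ≠ 0) :
    ((gaussianReal m₁ v₁).prod (gaussianReal m₂ v₂)) {p : ℝ × ℝ | t ≤ p.2 - p.1}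
      = gaussianReal (m₂ - m₁) (v₁ + v₂) (Ici t) := by
  have hs : MeasurableSet {p : ℝ × ℝ | t ≤ p.2 - p.1} :=
    measurableSet_le measurable_const (measurable_snd.sub measurable_fst)
  rw [Measure.prod_apply hs]
  have hpre : ∀ x : ℝ, (Prod.mk x ⁻¹' {p : ℝ × ℝ | t ≤ p.2 - p.1}) = Ici (t + x) := by
    intro x
    ext y
    simp [Set.mem_Ici, le_sub_iff_add_le, add_comm]
  simp_rw [hpre]
  have hmono : Antitone fun x : ℝ => gaussianReal m₂ v₂ (Ici (t + x)) := fun x y hxy =>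
    measure_mono (Ici_subset_Ici.2 (by linarith))
  rw [gaussianReal_of_var_ne_zero _ hv₁,
    lintegral_withDensity_eq_lintegral_mul _ (measurable_gaussianPDF _ _) hmono.measurable]
  have hIci : ∀ x : ℝ, gaussianReal m₂ v₂ (Ici (t + x))
      = ∫⁻ u, (Ici t).indicator (fun u => gaussianPDF m₂ v₂ (u + x)) u := by
    intro x
    rw [gaussianReal_apply _ hv₂, ← lintegral_indicator measurableSet_Ici _]
    rw [← lintegral_add_right_eq_self (μ := volume)
      (fun y => (Ici (t + x)).indicator (gaussianPDF m₂ v₂) y) x]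
    refine lintegral_congr fun u => ?_
    by_cases hu : t ≤ u
    · rw [Set.indicator_of_mem (by simpa using (add_le_add_right hu x)),
        Set.indicator_of_mem (by simpa using hu)]
    · rw [Set.indicator_of_notMem
        (by simp only [Set.mem_Ici, not_le] at hu ⊢; linarith),
        Set.indicator_of_notMem (by simpa using hu)]
  simp_rw [Pi.mul_apply, hIci]
  have hswap : ∫⁻ x, gaussianPDF m₁ v₁ x *
        ∫⁻ u, (Ici t).indicator (fun u => gaussianPDF m₂ v₂ (u + x)) u
      = ∫⁻ u in Ici t, ∫⁻ x, gaussianPDF m₁ v₁ x * gaussianPDF m₂ v₂ (u + x) := by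
    have hmeas : Measurable fun q : ℝ × ℝ =>
        gaussianPDF m₁ v₁ q.1 *
          (Prod.snd ⁻¹' Ici t).indicator (fun q : ℝ × ℝ => gaussianPDF m₂ v₂ (q.2 + q.1)) q :=
      ((measurable_gaussianPDF _ _).comp measurable_fst).mul
        (((measurable_gaussianPDF _ _).comp (measurable_snd.add measurable_fst)).indicator
          (measurable_snd measurableSet_Ici))
    calc ∫⁻ x, gaussianPDF m₁ v₁ x *
            ∫⁻ u, (Ici t).indicator (fun u => gaussianPDF m₂ v₂ (u + x)) u
        = ∫⁻ x, ∫⁻ u, gaussianPDF m₁ v₁ x *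
            (Prod.snd ⁻¹' Ici t).indicator
              (fun q : ℝ × ℝ => gaussianPDF m₂ v₂ (q.2 + q.1)) (x, u) := by
          refine lintegral_congr fun x => ?_
          rw [← lintegral_const_mul' (gaussianPDF m₁ v₁ x) _ ENNReal.ofReal_ne_top]
          congr 1
      _ = ∫⁻ u, ∫⁻ x, gaussianPDF m₁ v₁ x *
            (Prod.snd ⁻¹' Ici t).indicator
              (fun q : ℝ × ℝ => gaussianPDF m₂ v₂ (q.2 + q.1)) (x, u) := by
          exact lintegral_lintegral_swap hmeas.aemeasurable
      _ = ∫⁻ u, (Ici t).indicator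
            (fun u => ∫⁻ x, gaussianPDF m₁ v₁ x * gaussianPDF m₂ v₂ (u + x)) u := by
          refine lintegral_congr fun u => ?_
          by_cases hu : u ∈ Ici t
          · rw [Set.indicator_of_mem hu]
            refine lintegral_congr fun x => ?_
            rw [Set.indicator_of_mem (by simpa using hu)]
          · rw [Set.indicator_of_notMem hu]
            have hz : ∀ x : ℝ, gaussianPDF m₁ v₁ x *
                (Prod.snd ⁻¹' Ici t).indicator
                  (fun q : ℝ × ℝ => gaussianPDF m₂ v₂ (q.2 + q.1)) (x, u) = 0 := by
              intro x
              rw [Set.indicator_of_notMem (by simpa using hu), mul_zero]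
            simp only [hz, lintegral_zero]
      _ = _ := by rw [← lintegral_indicator measurableSet_Ici _]
  rw [hswap]
  have : ∀ u : ℝ, ∫⁻ x, gaussianPDF m₁ v₁ x * gaussianPDF m₂ v₂ (u + x)
      = gaussianPDF (m₂ - m₁) (v₁ + v₂) u := fun u => conv_pdf m₁ m₂ u hv₁ hv₂
  simp_rw [this]
  rw [gaussianReal_apply _ (by simp [hv₁]) (Ici t)]

lemma std_map_const_mul_neg_one :
    (gaussianReal 0 1).map (fun x : ℝ => (-1 : ℝ) * x) = gaussianReal 0 1 := by
  rw [show (fun x : ℝ => (-1 : ℝ) * x) = ((-1 : ℝ) * ·) from rfl, gaussianReal_map_const_mul]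
  norm_num

lemma std_Ici (s : ℝ) : gaussianReal 0 1 (Ici s) = gaussianReal 0 1 (Iic (-s)) := by
  conv_lhs => rw [← std_map_const_mul_neg_one]
  rw [Measure.map_apply (measurable_const_mul _) measurableSet_Ici]
  congr 1
  ext x
  simp only [Set.mem_preimage, Set.mem_Ici, Set.mem_Iic, neg_one_mul]
  constructor <;> intro h <;> linarith

lemma std_map_affine (μ : ℝ) {v : ℝ≥0} (hv : v ≠ 0) :
    (gaussianReal 0 1).map (fun x => Real.sqrt v * x + μ) = gaussianReal μ v := by
  have hv2 : (⟨(Real.sqrt v)^2, sq_nonneg _⟩ : ℝ≥0) = v := by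
    ext
    simp [Real.sq_sqrt v.2]
  have h1 : (gaussianReal 0 1).map (Real.sqrt v * ·) = gaussianReal 0 v := by
    rw [gaussianReal_map_const_mul, mul_zero, mul_one]
    congr 1
  calc (gaussianReal 0 1).map (fun x => Real.sqrt v * x + μ)
      = ((gaussianReal 0 1).map (Real.sqrt v * ·)).map (· + μ) := by
        rw [Measure.map_map (measurable_add_const μ) (measurable_const_mul _)]
        rfl
    _ = gaussianReal μ v := by rw [h1, gaussianReal_map_add_const, zero_add]

lemma gauss_Ici_toReal (μ : ℝ) {v : ℝ≥0} (hv : v ≠ 0) (t : ℝ) :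
    ((gaussianReal μ v) (Ici t)).toReal = stdNormCDF ((μ - t) / Real.sqrt v) := by
  have hvpos : (0:ℝ) < (v:ℝ) := lt_of_le_of_ne v.2 (by simpa [eq_comm] using hv)
  have hsv : 0 < Real.sqrt v := Real.sqrt_pos.2 hvpos
  rw [← std_map_affine μ hv, Measure.map_apply (by fun_prop) measurableSet_Ici]
  have hset : (fun x => Real.sqrt v * x + μ) ⁻¹' Ici t = Ici ((t - μ) / Real.sqrt v) := by
    ext x
    simp only [Set.mem_preimage, Set.mem_Ici, div_le_iff₀ hsv]
    constructor <;> intro h <;> nlinarith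
  rw [hset, std_Ici, ← neg_div, neg_sub, stdNormCDF]

lemma continuous_stdNormCDF : Continuous stdNormCDF := by
  have hrepr : ∀ x : ℝ, stdNormCDF x = ∫ y, (Iic x).indicator (gaussianPDFReal 0 1) y := by
    intro x
    rw [stdNormCDF, gaussianReal_apply_eq_integral _ one_ne_zero,
      ENNReal.toReal_ofReal
        (setIntegral_nonneg measurableSet_Iic fun y _ => gaussianPDFReal_nonneg _ _ y),
      integral_indicator measurableSet_Iic]
  rw [continuous_iff_continuousAt]
  intro x₀
  rw [ContinuousAt]
  have hae : ∀ᵐ y : ℝ, y ≠ x₀ := by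
    rw [ae_iff]
    have h1 : {y : ℝ | ¬ y ≠ x₀} = {x₀} := by ext y; simp
    rw [h1]
    exact measure_singleton x₀
  have key : Tendsto (fun x : ℝ => ∫ y, (Iic x).indicator (gaussianPDFReal 0 1) y) (nhds x₀)
      (nhds (∫ y, (Iic x₀).indicator (gaussianPDFReal 0 1) y)) := by
    refine tendsto_integral_filter_of_dominated_convergence (gaussianPDFReal 0 1)
      ?_ ?_ (integrable_gaussianPDFReal 0 1) ?_
    · exact Filter.Eventually.of_forall fun x =>
        ((measurable_gaussianPDFReal 0 1).indicator measurableSet_Iic).aestronglyMeasurable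
    · refine Filter.Eventually.of_forall fun x => Filter.Eventually.of_forall fun y => ?_
      rw [Real.norm_eq_abs, abs_of_nonneg (Set.indicator_nonneg
        (fun y _ => gaussianPDFReal_nonneg _ _ y) y)]
      exact Set.indicator_le_self' (fun y _ => gaussianPDFReal_nonneg _ _ y) y
    · filter_upwards [hae] with y hy
      rcases lt_or_gt_of_ne hy with hlt | hgt
      · rw [Set.indicator_of_mem (Set.mem_Iic.2 hlt.le)]
        refine Tendsto.congr' ?_ tendsto_const_nhds
        filter_upwards [eventually_gt_nhds hlt] with x hx
        rw [Set.indicator_of_mem (Set.mem_Iic.2 hx.le)]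
      · rw [Set.indicator_of_notMem (by simpa using hgt)]
        refine Tendsto.congr' ?_ tendsto_const_nhds
        filter_upwards [eventually_lt_nhds hgt] with x hx
        rw [Set.indicator_of_notMem (by simp [not_le]; linarith)]
  refine Tendsto.congr' ?_ (by rw [← hrepr x₀] at key; exact key)
  exact Filter.Eventually.of_forall fun x => (hrepr x).symm

/-- **Limit of `ψ_{Q,n}` in Example 2**: as `n → ∞` (along even `n = 2m`),
`ψ_{Q,n} → Φ( a/√0.96 − z_{0.9} )`, where `0.96 = 4·(0.4)·(0.6)`. -/
theorem psiQ_limit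
    (a z : ℝ) (ha : 0 < a) (hz : stdNormCDF z = 0.9) :
    Tendsto (fun m : ℕ => psiQ a m z) atTop
      (nhds (stdNormCDF (a / Real.sqrt 0.96 - z))) := by
  have hsqrt : Tendsto Real.sqrt atTop atTop := by
    apply tendsto_atTop_atTop.2
    intro b
    refine ⟨b ^ 2, fun x hx => ?_⟩
    calc b ≤ |b| := le_abs_self b
      _ = Real.sqrt (b ^ 2) := (Real.sqrt_sq_eq_abs b).symm
      _ ≤ Real.sqrt x := Real.sqrt_le_sqrt hx
  have hsqrt2m : Tendsto (fun m : ℕ => Real.sqrt (2 * m)) atTop atTop :=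
    hsqrt.comp ((tendsto_natCast_atTop_atTop (R := ℝ)).const_mul_atTop (by norm_num))
  have hdiv0 : Tendsto (fun m : ℕ => a / Real.sqrt (2 * m)) atTop (nhds 0) :=
    Tendsto.div_atTop tendsto_const_nhds hsqrt2m
  have homega : Tendsto (fun m : ℕ => omega1 a m) atTop (nhds 0.4) := by
    have := hdiv0.const_add (0.4 : ℝ)
    simpa [omega1] using this
  have hwlim : Tendsto (fun m : ℕ => omega1 a m * (1 - omega1 a m)) atTop
      (nhds (0.4 * (1 - 0.4))) := homega.mul (tendsto_const_nhds.sub homega)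
  have harg : Tendsto
      (fun m : ℕ => a / Real.sqrt (2 * (0.4 * (1 - 0.4) + omega1 a m * (1 - omega1 a m))) - z)
      atTop (nhds (a / Real.sqrt 0.96 - z)) := by
    have h1 : Tendsto
        (fun m : ℕ => 2 * (0.4 * (1 - 0.4) + omega1 a m * (1 - omega1 a m)))
        atTop (nhds 0.96) := by
      have := ((tendsto_const_nhds (x := (0.4 * (1 - 0.4) : ℝ))).add hwlim).const_mul (2:ℝ)
      convert this using 2
      norm_num
    have h2 := (Real.continuous_sqrt.tendsto _).comp h1
    exact Tendsto.sub_const (Tendsto.div tendsto_const_nhds h2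
      (by positivity : Real.sqrt (0.96:ℝ) ≠ 0)) z
  have hev : (fun m : ℕ => stdNormCDF
        (a / Real.sqrt (2 * (0.4 * (1 - 0.4) + omega1 a m * (1 - omega1 a m))) - z))
      =ᶠ[atTop] fun m : ℕ => psiQ a m z := by
    have hm1 : ∀ᶠ m : ℕ in atTop, 1 ≤ m := eventually_ge_atTop 1
    have hm2 : ∀ᶠ m : ℕ in atTop, omega1 a m < 1 := by
      have : (0.4 : ℝ) < 1 := by norm_num
      exact homega.eventually (eventually_lt_nhds this)
    filter_upwards [hm1, hm2] with m hm1 hm2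
    have hmR : (0:ℝ) < (m:ℝ) := by exact_mod_cast hm1
    have homega_pos : 0 < omega1 a m := by
      have : 0 < a / Real.sqrt (2 * m) := by positivity
      unfold omega1; linarith
    have hw_pos : 0 < omega1 a m * (1 - omega1 a m) :=
      mul_pos homega_pos (by linarith)
    set v₁ : ℝ≥0 := Real.toNNReal (0.4 * (1 - 0.4) / m) with hv₁def
    set v₂ : ℝ≥0 := Real.toNNReal (omega1 a m * (1 - omega1 a m) / m) with hv₂def
    have hv₁ : v₁ ≠ 0 := by
      rw [hv₁def, ← pos_iff_ne_zero, Real.toNNReal_pos]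
      positivity
    have hv₂ : v₂ ≠ 0 := by
      rw [hv₂def, ← pos_iff_ne_zero, Real.toNNReal_pos]
      positivity
    have hcoe : ((v₁ + v₂ : ℝ≥0) : ℝ) = vQ a m := by
      push_cast
      rw [hv₁def, hv₂def, Real.coe_toNNReal _ (by positivity), Real.coe_toNNReal _ (by positivity)]
      unfold vQ
      field_simp
    have hvQpos : 0 < vQ a m := by
      rw [← hcoe]
      have : (0:ℝ) < (v₁:ℝ) := by
        simp only [hv₁def, Real.coe_toNNReal _ (by positivity : (0:ℝ) ≤ 0.4 * (1 - 0.4) / m)]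
        positivity
      have h2 : (0:ℝ) ≤ (v₂:ℝ) := v₂.2
      push_cast
      linarith
    have step1 : psiQ a m z
        = ((gaussianReal (omega1 a m - 0.4) (v₁ + v₂)
            (Ici (z * Real.sqrt (vQ a m)))).toReal) := by
      rw [psiQ, fQ, prod_gauss_apply _ _ _ hv₁ hv₂]
    have step2 : psiQ a m z = stdNormCDF
        ((omega1 a m - 0.4 - z * Real.sqrt (vQ a m)) / Real.sqrt (vQ a m)) := by
      rw [step1, gauss_Ici_toReal _ (by simp [hv₁]) _, hcoe]
    have hsv : 0 < Real.sqrt (vQ a m) := Real.sqrt_pos.2 hvQpos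
    have harith : (omega1 a m - 0.4 - z * Real.sqrt (vQ a m)) / Real.sqrt (vQ a m)
        = a / Real.sqrt (2 * (0.4 * (1 - 0.4) + omega1 a m * (1 - omega1 a m))) - z := by
      have hμ : omega1 a m - 0.4 = a / Real.sqrt (2 * m) := by unfold omega1; ring
      have hkey : Real.sqrt (2 * (0.4 * (1 - 0.4) + omega1 a m * (1 - omega1 a m)))
          = Real.sqrt (2 * m) * Real.sqrt (vQ a m) := by
        rw [← Real.sqrt_mul (by positivity)]
        congr 1
        unfold vQ
        field_simp
      rw [sub_div, hμ, hkey]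
      congr 1
      · rw [div_div]
      · rw [mul_div_assoc, div_self hsv.ne', mul_one]
    rw [step2, harith]
  exact Tendsto.congr' hev ((continuous_stdNormCDF.tendsto _).comp harg)

end
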